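/- Let K be a field of characteristic 2, Δ ∈ K such that X² + X + Δ has no root in K, L a field extension of K, δ ∈ L with δ² + δ = Δ and L = K(δ), and σ the unique K-algebra automorphism of L with σ(δ) = δ + 1. Define ψ : K × K → L by ψ(x, y) = xδ + y and let C = {(x, y) ∈ K × K : Δx² + xy + y² = 1}. Then: (i) for all (x, y) ∈ K × K, ψ(x, y)·σ(ψ(x, y)) = 1 if and only if Δx² + xy + y² = 1; (ii) ψ restricts to a bijection from C onto {z ∈ L : z·σ(z) = 1}; (iii) ψ(0, 1) = 1 and for all (x₁, y₁), (x₂, y₂) ∈ C, ψ(x₁, y₁)·ψ(x₂, y₂) = ψ(x₁x₂ + x₁y₂ + x₂y₁, Δx₁x₂ + y₁y₂). Hence the operation (x₁,y₁) ⊕ (x₂,y₂) = (x₁x₂ + x₁y₂ + x₂y₁, Δx₁x₂ + y₁y₂) with neutral element (0,1) makes the Pell conic C a group isomorphic to the norm-one subgroup of Lˣ. -/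

import Mathlib

open Polynomial

/-- let `K` be a field of characteristic 2, `Δ ∈ K` such that `X² + X + Δ` has no
root in `K`, `L = K(δ)` with `δ² + δ = Δ`, and `σ` the unique `K`-algebra automorphism of `L`
with `σ(δ) = δ + 1`.  Define `ψ(x, y) = xδ + y` and let `C` be the characteristic-2 Pell conic
`Δx² + xy + y² = 1`.  Then:
(i) `ψ(x,y)·σ(ψ(x,y)) = 1 ↔ Δx² + xy + y² = 1`;
(ii) `ψ` restricts to a bijection from `C` onto the norm-one subgroup `{z ∈ L : z·σ(z) = 1}`;
(iii) `ψ(0,1) = 1`, and for points of `C`,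
`ψ(x₁,y₁)·ψ(x₂,y₂) = ψ(x₁x₂ + x₁y₂ + x₂y₁, Δx₁x₂ + y₁y₂)`.
Hence `⊕` with neutral element `(0,1)` makes the Pell conic a group isomorphic to the norm-one
subgroup of `Lˣ`. -/
theorem pell_conic_group_law_char_two
    (K L : Type*) [Field K] [Field L] [Algebra K L] [CharP K 2]
    (Δ : K) (hΔ : ∀ x : K, x ^ 2 + x + Δ ≠ 0)
    (δ : L) (hδ : δ ^ 2 + δ = algebraMap K L Δ) (hgen : Algebra.adjoin K {δ} = ⊤)
    (σ : L ≃ₐ[K] L) (hσ : σ δ = δ + 1) :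
    (∀ x y : K,
        (algebraMap K L x * δ + algebraMap K L y) *
            σ (algebraMap K L x * δ + algebraMap K L y) = 1
          ↔ Δ * x ^ 2 + x * y + y ^ 2 = 1) ∧
    Set.BijOn (fun p : K × K => algebraMap K L p.1 * δ + algebraMap K L p.2)
      {p : K × K | Δ * p.1 ^ 2 + p.1 * p.2 + p.2 ^ 2 = 1} {z : L | z * σ z = 1} ∧
    (algebraMap K L 0 * δ + algebraMap K L 1 = 1) ∧
    (∀ x₁ y₁ x₂ y₂ : K, Δ * x₁ ^ 2 + x₁ * y₁ + y₁ ^ 2 = 1 → Δ * x₂ ^ 2 + x₂ * y₂ + y₂ ^ 2 = 1 →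
      (algebraMap K L x₁ * δ + algebraMap K L y₁) * (algebraMap K L x₂ * δ + algebraMap K L y₂)
        = algebraMap K L (x₁ * x₂ + x₁ * y₂ + x₂ * y₁) * δ
            + algebraMap K L (Δ * x₁ * x₂ + y₁ * y₂)) := by
  have inj := (algebraMap K L).injective
  haveI : CharP L 2 := charP_of_injective_algebraMap inj 2
  have h2 : (2 : L) = 0 := by exact_mod_cast CharP.cast_eq_zero L 2
  have h2K : (2 : K) = 0 := by exact_mod_cast CharP.cast_eq_zero K 2
  set φ := algebraMap K L with hφ
  have hσψ : ∀ a b : K, σ (φ a * δ + φ b) = φ a * δ + φ (a + b) := by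
    intro a b
    rw [map_add, map_mul, AlgEquiv.commutes, AlgEquiv.commutes, hσ, map_add]
    ring
  have hp : ∀ a₁ b₁ a₂ b₂ : K,
      (φ a₁ * δ + φ b₁) * (φ a₂ * δ + φ b₂)
        = φ (a₁ * a₂ + a₁ * b₂ + a₂ * b₁) * δ + φ (Δ * a₁ * a₂ + b₁ * b₂) := by
    intro a₁ b₁ a₂ b₂
    simp only [map_add, map_mul]
    linear_combination (φ a₁ * φ a₂) * hδ - φ a₁ * φ a₂ * δ * h2
  have key : ∀ a b : K, (φ a * δ + φ b) * σ (φ a * δ + φ b)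
      = φ (Δ * a ^ 2 + a * b + b ^ 2) := by
    intro a b
    rw [hσψ]
    simp only [map_add, map_mul, map_pow]
    linear_combination (φ a) ^ 2 * hδ + φ a * φ b * δ * h2
  have hiff : ∀ x y : K,
      (φ x * δ + φ y) * σ (φ x * δ + φ y) = 1 ↔ Δ * x ^ 2 + x * y + y ^ 2 = 1 := by
    intro x y
    rw [key, ← map_one φ, inj.eq_iff]
  have hspan : ∀ z : L, ∃ a b : K, z = φ a * δ + φ b := by
    intro z
    have hz : z ∈ Algebra.adjoin K {δ} := hgen.symm ▸ Algebra.mem_top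
    induction hz using Algebra.adjoin_induction with
    | mem x hx =>
        exact ⟨1, 0, by simp [Set.mem_singleton_iff.mp hx]⟩
    | algebraMap r => exact ⟨0, r, by simp [hφ]⟩
    | add x y hx hy ihx ihy =>
        obtain ⟨a₁, b₁, rfl⟩ := ihx
        obtain ⟨a₂, b₂, rfl⟩ := ihy
        exact ⟨a₁ + a₂, b₁ + b₂, by simp only [map_add]; ring⟩
    | mul x y hx hy ihx ihy =>
        obtain ⟨a₁, b₁, rfl⟩ := ihx
        obtain ⟨a₂, b₂, rfl⟩ := ihy
        exact ⟨_, _, (hp a₁ b₁ a₂ b₂)⟩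
  refine ⟨hiff, ⟨?_, ?_, ?_⟩, by simp, fun x₁ y₁ x₂ y₂ _ _ => hp x₁ y₁ x₂ y₂⟩
  · intro p hp'
    exact (hiff p.1 p.2).mpr hp'
  · rintro ⟨x₁, y₁⟩ h₁ ⟨x₂, y₂⟩ h₂ heq
    simp only at heq
    by_cases hx : x₁ = x₂
    · subst hx
      have hy : φ y₁ = φ y₂ := by linear_combination heq
      exact Prod.ext rfl (inj hy)
    · exfalso
      have hne : φ (x₁ - x₂) ≠ 0 := fun h => hx (sub_eq_zero.mp (inj (by rw [h, map_zero])))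
      have hd : δ = φ ((y₂ - y₁) / (x₁ - x₂)) := by
        rw [map_div₀, eq_div_iff hne, map_sub, map_sub]
        linear_combination heq
      set c := (y₂ - y₁) / (x₁ - x₂)
      have hcc : c ^ 2 + c = Δ := by
        apply inj
        rw [map_add, map_pow, ← hd, hδ]
      apply hΔ c
      rw [hcc]
      linear_combination Δ * h2K
  · intro z hz
    obtain ⟨a, b, rfl⟩ := hspan z
    exact ⟨(a, b), (hiff a b).mp hz, rfl⟩
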